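/- Let a, b, c, d be complex numbers of modulus 1, pairwise distinct, and p ≥ 3 an integer with H_{p−2}(a,b,c) ≠ H_{p−2}(a,b,d). Then the 4×4 matrix with rows (1, x, x², x^p) for x ∈ {a, b, c, d} is invertible. -/

import Mathlib

open Finset

/-- The complete homogeneous symmetric polynomial of degree `k` in three variables. -/
noncomputable def Hsym (k : ℕ) (a b c : ℂ) : ℂ :=
  ∑ l ∈ Finset.range (k + 1), ∑ m ∈ Finset.range (k + 1 - l), a ^ l * b ^ m * c ^ (k - l - m)

lemma Hsym_mul_bc (k : ℕ) (a b c : ℂ) :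
    Hsym k a b c * (b - c) =
      ∑ l ∈ Finset.range (k + 1), a ^ l * (b ^ (k + 1 - l) - c ^ (k + 1 - l)) := by
  rw [Hsym, Finset.sum_mul]
  refine Finset.sum_congr rfl (fun l hl => ?_)
  have hlk : l ≤ k := Nat.lt_succ_iff.mp (Finset.mem_range.mp hl)
  have h1 : ∀ m ∈ Finset.range (k + 1 - l), a ^ l * b ^ m * c ^ (k - l - m)
      = a ^ l * (b ^ m * c ^ (k + 1 - l - 1 - m)) := by
    intro m hm
    have : k + 1 - l - 1 = k - l := by omega
    rw [this, mul_assoc]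
  rw [Finset.sum_congr rfl h1, ← Finset.mul_sum, mul_assoc,
    geom_sum₂_mul b c (k + 1 - l)]

lemma geom_shift (k : ℕ) (x y : ℂ) :
    (∑ l ∈ Finset.range (k + 1), x ^ l * y ^ (k + 1 - l)) * (x - y)
      = y * (x ^ (k + 1) - y ^ (k + 1)) := by
  have h1 : ∀ l ∈ Finset.range (k + 1), x ^ l * y ^ (k + 1 - l)
      = y * (x ^ l * y ^ (k + 1 - 1 - l)) := by
    intro l hl
    have hlk : l ≤ k := Nat.lt_succ_iff.mp (Finset.mem_range.mp hl)
    have : k + 1 - l = (k + 1 - 1 - l) + 1 := by omega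
    rw [this, pow_succ]; ring
  rw [Finset.sum_congr rfl h1, ← Finset.mul_sum, mul_assoc,
    geom_sum₂_mul x y (k + 1)]

/-- Bialternant formula for `Hsym`. -/
lemma Hsym_key (k : ℕ) (a b c : ℂ) :
    Hsym k a b c * ((a - b) * (a - c) * (b - c)) =
      (b - c) * a ^ (k + 2) - (a - c) * b ^ (k + 2) + (a - b) * c ^ (k + 2) := by
  have h1 := Hsym_mul_bc k a b c
  have hb := geom_shift k a b
  have hc := geom_shift k a c
  have hsplit : ∑ l ∈ Finset.range (k + 1), a ^ l * (b ^ (k + 1 - l) - c ^ (k + 1 - l))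
      = (∑ l ∈ Finset.range (k + 1), a ^ l * b ^ (k + 1 - l))
        - ∑ l ∈ Finset.range (k + 1), a ^ l * c ^ (k + 1 - l) := by
    rw [← Finset.sum_sub_distrib]
    exact Finset.sum_congr rfl (fun l _ => by ring)
  have h2 : Hsym k a b c * (b - c) * (a - b) * (a - c)
      = b * (a ^ (k + 1) - b ^ (k + 1)) * (a - c) - c * (a ^ (k + 1) - c ^ (k + 1)) * (a - b) := by
    rw [h1, hsplit, sub_mul, sub_mul]
    linear_combination (a - c) * hb - (a - b) * hc
  have e1 : a ^ (k + 2) = a * a ^ (k + 1) := by rw [pow_succ]; ring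
  have e2 : b ^ (k + 2) = b * b ^ (k + 1) := by rw [pow_succ]; ring
  have e3 : c ^ (k + 2) = c * c ^ (k + 1) := by rw [pow_succ]; ring
  rw [e1, e2, e3]
  linear_combination h2

open Matrix in
lemma det_fin_four' (A : Matrix (Fin 4) (Fin 4) ℂ) :
    A.det =
      A 0 0 * (A 1 1 * (A 2 2 * A 3 3 - A 2 3 * A 3 2)
             - A 1 2 * (A 2 1 * A 3 3 - A 2 3 * A 3 1)
             + A 1 3 * (A 2 1 * A 3 2 - A 2 2 * A 3 1))
    - A 0 1 * (A 1 0 * (A 2 2 * A 3 3 - A 2 3 * A 3 2)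
             - A 1 2 * (A 2 0 * A 3 3 - A 2 3 * A 3 0)
             + A 1 3 * (A 2 0 * A 3 2 - A 2 2 * A 3 0))
    + A 0 2 * (A 1 0 * (A 2 1 * A 3 3 - A 2 3 * A 3 1)
             - A 1 1 * (A 2 0 * A 3 3 - A 2 3 * A 3 0)
             + A 1 3 * (A 2 0 * A 3 1 - A 2 1 * A 3 0))
    - A 0 3 * (A 1 0 * (A 2 1 * A 3 2 - A 2 2 * A 3 1)
             - A 1 1 * (A 2 0 * A 3 2 - A 2 2 * A 3 0)
             + A 1 2 * (A 2 0 * A 3 1 - A 2 1 * A 3 0)) := by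
  rw [Matrix.det_succ_row_zero, Fin.sum_univ_four]
  have h0 : (0 : Fin 4).succAbove = ![1, 2, 3] := by decide
  have h1 : (1 : Fin 4).succAbove = ![0, 2, 3] := by decide
  have h2 : (2 : Fin 4).succAbove = ![0, 1, 3] := by decide
  have h3 : (3 : Fin 4).succAbove = ![0, 1, 2] := by decide
  rw [h0, h1, h2, h3]
  simp only [Matrix.det_fin_three, Matrix.submatrix_apply, Fin.isValue,
    Matrix.cons_val_zero, Matrix.cons_val_one, Matrix.head_cons, Matrix.cons_val_two,
    Matrix.tail_cons, Fin.val_zero, Fin.val_one, Fin.val_two, pow_zero, pow_one]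
  have hs : (Fin.succ 2 : Fin 4) = 3 := rfl
  have hv : (((3 : Fin 4)) : ℕ) = 3 := rfl
  rw [hs, hv]
  norm_num
  ring

/-- For pairwise distinct unimodular `a, b, c, d` and `p ≥ 3` with
`H_{p-2}(a,b,c) ≠ H_{p-2}(a,b,d)`, the matrix with rows `(1, x, x², x^p)`, `x ∈ {a,b,c,d}`,
is invertible. -/
theorem four_lines_matrix_invertible (a b c d : ℂ)
    (ha : ‖a‖ = 1) (hb : ‖b‖ = 1)
    (hc : ‖c‖ = 1) (hd : ‖d‖ = 1)
    (hab : a ≠ b) (hac : a ≠ c) (had : a ≠ d)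
    (hbc : b ≠ c) (hbd : b ≠ d) (hcd : c ≠ d)
    (p : ℕ) (hp : 3 ≤ p)
    (hH : Hsym (p - 2) a b c ≠ Hsym (p - 2) a b d) :
    IsUnit (!![1, a, a ^ 2, a ^ p;
               1, b, b ^ 2, b ^ p;
               1, c, c ^ 2, c ^ p;
               1, d, d ^ 2, d ^ p] : Matrix (Fin 4) (Fin 4) ℂ) := by
  have hp2 : p - 2 + 2 = p := by omega
  have hkc := Hsym_key (p - 2) a b c
  have hkd := Hsym_key (p - 2) a b d
  rw [hp2] at hkc hkd
  have hab' : a - b ≠ 0 := sub_ne_zero.mpr hab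
  have hac' : a - c ≠ 0 := sub_ne_zero.mpr hac
  have had' : a - d ≠ 0 := sub_ne_zero.mpr had
  have hbc' : b - c ≠ 0 := sub_ne_zero.mpr hbc
  have hbd' : b - d ≠ 0 := sub_ne_zero.mpr hbd
  rw [Matrix.isUnit_iff_isUnit_det, isUnit_iff_ne_zero]
  intro hdet
  rw [det_fin_four'] at hdet
  norm_num [Matrix.cons_val_zero, Matrix.cons_val_one, Matrix.head_cons,
    Matrix.cons_val_two, Matrix.cons_val_three, Matrix.tail_cons,
    Matrix.vecHead, Matrix.vecTail] at hdet
  apply hH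
  have hTT : ((b - c) * a ^ p - (a - c) * b ^ p + (a - b) * c ^ p)
        * ((a - b) * (a - d) * (b - d))
      = ((b - d) * a ^ p - (a - d) * b ^ p + (a - b) * d ^ p)
        * ((a - b) * (a - c) * (b - c)) := by
    linear_combination (a - b) * hdet
  have h3 : Hsym (p - 2) a b c * (((a - b) * (a - c) * (b - c)) * ((a - b) * (a - d) * (b - d)))
      = Hsym (p - 2) a b d * (((a - b) * (a - c) * (b - c)) * ((a - b) * (a - d) * (b - d))) := by
    calc Hsym (p - 2) a b c * (((a - b) * (a - c) * (b - c)) * ((a - b) * (a - d) * (b - d)))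
        = (Hsym (p - 2) a b c * ((a - b) * (a - c) * (b - c))) * ((a - b) * (a - d) * (b - d)) := by
          ring
      _ = (Hsym (p - 2) a b d * ((a - b) * (a - d) * (b - d))) * ((a - b) * (a - c) * (b - c)) := by
          rw [hkc, hkd, hTT]
      _ = _ := by ring
  have hne : (((a - b) * (a - c) * (b - c)) * ((a - b) * (a - d) * (b - d))) ≠ 0 :=
    mul_ne_zero (mul_ne_zero (mul_ne_zero hab' hac') hbc')
      (mul_ne_zero (mul_ne_zero hab' had') hbd')
  exact mul_right_cancel₀ hne h3
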